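/- arXiv:0909.0710 — 3 statements merged into one kernel-verified Lean document; each statement's English description precedes it below -/
import Mathlib

section
/- For every positive integer N, the product over n = 1 to N of tan(nπ/(2N+1)) equals √(2N+1). -/
open Complex Finset Polynomial

lemma abs_one_sub_exp' (t : ℝ) :
    ‖1 - Complex.exp (2 * t * Complex.I)‖ = 2 * |Real.sin t| := by
  have h : Complex.exp (2 * (t:ℂ) * Complex.I)
      = Real.cos (2*t) + Real.sin (2*t) * Complex.I := by
    rw [show 2 * (t:ℂ) * Complex.I = ((2*t : ℝ):ℂ) * Complex.I by push_cast; ring,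
      Complex.exp_mul_I, Complex.ofReal_cos, Complex.ofReal_sin]
  rw [h]
  rw [Complex.norm_def]
  have hre : ((1 : ℂ) - (Real.cos (2*t) + Real.sin (2*t) * Complex.I)).re = 1 - Real.cos (2*t) := by
    simp [← Complex.ofReal_cos, ← Complex.ofReal_sin]
  have him : ((1 : ℂ) - (Real.cos (2*t) + Real.sin (2*t) * Complex.I)).im = - Real.sin (2*t) := by
    simp [← Complex.ofReal_cos, ← Complex.ofReal_sin]
  rw [Complex.normSq_apply, hre, him]
  have key : (1 - Real.cos (2*t)) * (1 - Real.cos (2*t)) + (- Real.sin (2*t)) * (- Real.sin (2*t))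
      = (2 * Real.sin t)^2 := by
    have h1 := Real.sin_sq_add_cos_sq (2*t)
    have h2 := Real.cos_two_mul t
    have h3 := Real.sin_sq_add_cos_sq t
    nlinarith
  rw [key, Real.sqrt_sq_eq_abs, abs_mul]
  norm_num

lemma abs_one_add_exp' (t : ℝ) :
    ‖1 + Complex.exp (2 * t * Complex.I)‖ = 2 * |Real.cos t| := by
  have h : Complex.exp (2 * (t:ℂ) * Complex.I)
      = Real.cos (2*t) + Real.sin (2*t) * Complex.I := by
    rw [show 2 * (t:ℂ) * Complex.I = ((2*t : ℝ):ℂ) * Complex.I by push_cast; ring,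
      Complex.exp_mul_I, Complex.ofReal_cos, Complex.ofReal_sin]
  rw [h, Complex.norm_def]
  have hre : ((1 : ℂ) + (Real.cos (2*t) + Real.sin (2*t) * Complex.I)).re = 1 + Real.cos (2*t) := by
    simp [← Complex.ofReal_cos, ← Complex.ofReal_sin]
  have him : ((1 : ℂ) + (Real.cos (2*t) + Real.sin (2*t) * Complex.I)).im = Real.sin (2*t) := by
    simp [← Complex.ofReal_cos, ← Complex.ofReal_sin]
  rw [Complex.normSq_apply, hre, him]
  have key : (1 + Real.cos (2*t)) * (1 + Real.cos (2*t)) + (Real.sin (2*t)) * (Real.sin (2*t))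
      = (2 * Real.cos t)^2 := by
    have h1 := Real.sin_sq_add_cos_sq (2*t)
    have h2 := Real.cos_two_mul t
    have h3 := Real.sin_sq_add_cos_sq t
    nlinarith
  rw [key, Real.sqrt_sq_eq_abs, abs_mul]
  norm_num

lemma prod_range_X_sub_pow (m : ℕ) (hm : 0 < m) (ω : ℂ) (hω : IsPrimitiveRoot ω m) :
    ∏ n ∈ Finset.range m, (X - C (ω ^ n)) = X ^ m - 1 := by
  rw [Polynomial.X_pow_sub_one_eq_prod hm hω]
  refine Finset.prod_nbij (fun n => ω ^ n) ?_ ?_ ?_ ?_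
  · intro n _
    rw [Polynomial.mem_nthRootsFinset hm, ← pow_mul, mul_comm, pow_mul, hω.pow_eq_one, one_pow]
  · intro a ha b hb hab
    simp only [Finset.coe_range, Set.mem_Iio] at ha hb
    exact hω.pow_inj ha hb hab
  · intro ζ hζ
    have : NeZero m := ⟨hm.ne'⟩
    simp only [Finset.coe_range, Finset.mem_coe, Polynomial.mem_nthRootsFinset hm] at hζ
    obtain ⟨i, hi, hiζ⟩ := hω.eq_pow_of_pow_eq_one hζ
    exact ⟨i, by simpa using hi, hiζ⟩
  · intro n _; rfl

lemma prod_Icc_X_sub_pow (N : ℕ) (ω : ℂ) (hω : IsPrimitiveRoot ω (2 * N + 1)) :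
    ∏ n ∈ Finset.Icc 1 (2 * N), (X - C (ω ^ n)) = ∑ k ∈ Finset.range (2 * N + 1), (X : ℂ[X]) ^ k := by
  have hm : 0 < 2 * N + 1 := by omega
  have h1 := prod_range_X_sub_pow (2 * N + 1) hm ω hω
  have hsplit : Finset.range (2 * N + 1) = insert 0 (Finset.Icc 1 (2 * N)) := by
    ext x; simp; omega
  rw [hsplit, Finset.prod_insert (by simp)] at h1
  have h2 : (∑ k ∈ Finset.range (2 * N + 1), (X : ℂ[X]) ^ k) * (X - 1) = X ^ (2*N+1) - 1 :=
    geom_sum_mul _ _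
  have hXne : (X : ℂ[X]) - C (ω ^ 0) ≠ 0 := X_sub_C_ne_zero _
  apply mul_left_cancel₀ hXne
  rw [h1, pow_zero, ← h2, map_one]
  ring

lemma prod_one_sub_pow (N : ℕ) (ω : ℂ) (hω : IsPrimitiveRoot ω (2 * N + 1)) :
    ∏ n ∈ Finset.Icc 1 (2 * N), (1 - ω ^ n) = (2 * N + 1 : ℂ) := by
  have := congrArg (Polynomial.eval 1) (prod_Icc_X_sub_pow N ω hω)
  simpa [Polynomial.eval_prod, Polynomial.eval_finset_sum] using this

lemma prod_one_add_pow (N : ℕ) (ω : ℂ) (hω : IsPrimitiveRoot ω (2 * N + 1)) :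
    ∏ n ∈ Finset.Icc 1 (2 * N), (1 + ω ^ n) = 1 := by
  have h := congrArg (Polynomial.eval (-1)) (prod_Icc_X_sub_pow N ω hω)
  simp only [Polynomial.eval_prod, Polynomial.eval_finset_sum, Polynomial.eval_sub,
    Polynomial.eval_X, Polynomial.eval_C, Polynomial.eval_pow] at h
  have hgeo : (∑ k ∈ Finset.range (2 * N + 1), (-1 : ℂ) ^ k) = 1 := by
    rw [neg_one_geom_sum]
    simp [Nat.odd_iff]
  rw [hgeo] at h
  calc ∏ n ∈ Finset.Icc 1 (2 * N), (1 + ω ^ n)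
      = ∏ n ∈ Finset.Icc 1 (2 * N), ((-1) * (-1 - ω ^ n)) := by
        apply Finset.prod_congr rfl; intro n _; ring
    _ = (-1) ^ (Finset.Icc 1 (2*N)).card * ∏ n ∈ Finset.Icc 1 (2 * N), (-1 - ω ^ n) := by
        rw [Finset.prod_mul_distrib, Finset.prod_const]
    _ = 1 := by
        rw [h, Nat.card_Icc]
        simp [pow_mul]

lemma refl_prod (N : ℕ) (f : ℕ → ℝ) (hf : ∀ n ∈ Finset.Icc 1 N, f (2*N+1 - n) = f n) :
    ∏ n ∈ Finset.Icc 1 (2*N), f n = (∏ n ∈ Finset.Icc 1 N, f n)^2 := by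
  have hu : Finset.Icc 1 (2*N) = Finset.Icc 1 N ∪ Finset.Icc (N+1) (2*N) := by
    ext x; simp; omega
  have hd : Disjoint (Finset.Icc 1 N) (Finset.Icc (N+1) (2*N)) := by
    rw [Finset.disjoint_left]; intro a ha hb
    simp only [Finset.mem_Icc] at ha hb; omega
  rw [hu, Finset.prod_union hd, sq]
  congr 1
  refine Finset.prod_nbij' (fun n => 2*N+1-n) (fun n => 2*N+1-n) ?_ ?_ ?_ ?_ ?_
  · intro a ha; simp only [Finset.mem_Icc] at *; omega
  · intro a ha; simp only [Finset.mem_Icc] at *; omega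
  · intro a ha; simp only [Finset.mem_Icc] at ha; show 2*N+1-(2*N+1-a) = a; omega
  · intro a ha; simp only [Finset.mem_Icc] at ha; show 2*N+1-(2*N+1-a) = a; omega
  · intro a ha
    simp only [Finset.mem_Icc] at ha
    have h2 : 2*N+1-(2*N+1-a) = a := by omega
    have := hf (2*N+1-a) (by simp only [Finset.mem_Icc]; omega)
    rw [h2] at this
    show f a = f (2*N+1-a)
    exact this

theorem stmt0 (N : ℕ) (hN : 0 < N) :
    ∏ n ∈ Finset.Icc 1 N, Real.tan (n * Real.pi / (2 * N + 1)) =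
      Real.sqrt (2 * N + 1) := by
  have hmR : (0:ℝ) < 2 * N + 1 := by positivity
  have hmne : (2 * (N:ℝ) + 1) ≠ 0 := ne_of_gt hmR
  set ω : ℂ := Complex.exp (2 * Real.pi * Complex.I / (2*N+1)) with hωdef
  have hω : IsPrimitiveRoot ω (2*N+1) := by
    have := Complex.isPrimitiveRoot_exp (2*N+1) (by omega)
    convert this using 2
    push_cast; ring
  have hpow : ∀ n : ℕ, ω ^ n
      = Complex.exp (2 * ((n * Real.pi / (2*N+1) : ℝ) : ℂ) * Complex.I) := by
    intro n
    rw [hωdef, ← Complex.exp_nat_mul]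
    congr 1
    have h0 : (2 * (N:ℂ) + 1) ≠ 0 := by
      exact_mod_cast (show ((2*N+1 : ℕ) : ℂ) ≠ 0 by exact_mod_cast (by omega : 2*N+1 ≠ 0))
    push_cast
    field_simp
  -- the sine product over Icc 1 (2N)
  have hS2 : ∏ n ∈ Finset.Icc 1 (2*N), (2 * Real.sin (n * Real.pi / (2*N+1)))
      = 2 * N + 1 := by
    have h := congrArg norm (prod_one_sub_pow N ω hω)
    rw [Complex.norm_prod] at h
    have hL : ∀ n ∈ Finset.Icc 1 (2*N),
        ‖1 - ω ^ n‖ = 2 * Real.sin (n * Real.pi / (2*N+1)) := by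
      intro n hn
      simp only [Finset.mem_Icc] at hn
      rw [hpow n, abs_one_sub_exp']
      congr 1
      refine abs_of_pos (Real.sin_pos_of_pos_of_lt_pi ?_ ?_)
      · have : (0:ℝ) < n := by exact_mod_cast hn.1
        positivity
      · rw [div_lt_iff₀ hmR]
        have hn' : (n:ℝ) < 2 * N + 1 := by
          have : n ≤ 2*N := hn.2
          push_cast; exact_mod_cast by omega
        nlinarith [Real.pi_pos]
    rw [Finset.prod_congr rfl hL] at h
    rw [h]
    rw [show (2 * (N:ℂ) + 1) = ((2 * (N:ℝ) + 1 : ℝ) : ℂ) by push_cast; ring,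
      Complex.norm_real, Real.norm_eq_abs, abs_of_pos hmR]
  -- the cosine product over Icc 1 (2N)
  have hC2 : ∏ n ∈ Finset.Icc 1 (2*N), (2 * |Real.cos (n * Real.pi / (2*N+1))|)
      = 1 := by
    have h := congrArg norm (prod_one_add_pow N ω hω)
    rw [Complex.norm_prod] at h
    have hL : ∀ n ∈ Finset.Icc 1 (2*N),
        ‖1 + ω ^ n‖ = 2 * |Real.cos (n * Real.pi / (2*N+1))| := by
      intro n hn
      rw [hpow n, abs_one_add_exp']
    rw [Finset.prod_congr rfl hL] at h
    simpa using h
  -- reflection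
  have hreflS : ∀ n ∈ Finset.Icc 1 N,
      (2 * Real.sin (((2*N+1 - n : ℕ)) * Real.pi / (2*N+1)))
        = 2 * Real.sin (n * Real.pi / (2*N+1)) := by
    intro n hn
    simp only [Finset.mem_Icc] at hn
    have hc : ((2*N+1 - n : ℕ) : ℝ) = 2*N+1 - n := by
      have : n ≤ 2*N+1 := by omega
      push_cast [Nat.cast_sub this]; ring
    rw [hc, show (2*(N:ℝ)+1 - n) * Real.pi / (2*N+1)
        = Real.pi - n * Real.pi / (2*N+1) by field_simp, Real.sin_pi_sub]
  have hreflC : ∀ n ∈ Finset.Icc 1 N,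
      (2 * |Real.cos (((2*N+1 - n : ℕ)) * Real.pi / (2*N+1))|)
        = 2 * |Real.cos (n * Real.pi / (2*N+1))| := by
    intro n hn
    simp only [Finset.mem_Icc] at hn
    have hc : ((2*N+1 - n : ℕ) : ℝ) = 2*N+1 - n := by
      have : n ≤ 2*N+1 := by omega
      push_cast [Nat.cast_sub this]; ring
    rw [hc, show (2*(N:ℝ)+1 - n) * Real.pi / (2*N+1)
        = Real.pi - n * Real.pi / (2*N+1) by field_simp, Real.cos_pi_sub, abs_neg]
  have hSsq := refl_prod N (fun n => 2 * Real.sin (n * Real.pi / (2*N+1))) hreflS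
  have hCsq := refl_prod N (fun n => 2 * |Real.cos (n * Real.pi / (2*N+1))|) hreflC
  rw [hS2] at hSsq
  rw [hC2] at hCsq
  -- cos is positive on Icc 1 N
  have hcospos : ∀ n ∈ Finset.Icc 1 N, 0 < Real.cos (n * Real.pi / (2*N+1)) := by
    intro n hn
    simp only [Finset.mem_Icc] at hn
    apply Real.cos_pos_of_mem_Ioo
    constructor
    · have : (0:ℝ) ≤ (n:ℝ) * Real.pi / (2*N+1) := by positivity
      nlinarith [Real.pi_pos]
    · rw [div_lt_iff₀ hmR]
      have h2n : (2:ℝ) * n < 2 * N + 1 := by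
        have : n ≤ N := hn.2
        push_cast; exact_mod_cast by omega
      nlinarith [Real.pi_pos]
  have hsinpos : ∀ n ∈ Finset.Icc 1 N, 0 < Real.sin (n * Real.pi / (2*N+1)) := by
    intro n hn
    simp only [Finset.mem_Icc] at hn
    apply Real.sin_pos_of_pos_of_lt_pi
    · have : (0:ℝ) < n := by exact_mod_cast hn.1
      positivity
    · rw [div_lt_iff₀ hmR]
      have hn' : (n:ℝ) < 2 * N + 1 := by
        have : n ≤ N := hn.2
        push_cast; exact_mod_cast by omega
      nlinarith [Real.pi_pos]
  set S := ∏ n ∈ Finset.Icc 1 N, (2 * Real.sin (n * Real.pi / (2*N+1))) with hSdef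
  set Cc := ∏ n ∈ Finset.Icc 1 N, (2 * |Real.cos (n * Real.pi / (2*N+1))|) with hCdef
  have hSpos : 0 < S := Finset.prod_pos (fun n hn => by
    have := hsinpos n hn; positivity)
  have hCpos : 0 < Cc := Finset.prod_pos (fun n hn => by
    have := hcospos n hn; positivity)
  have hSval : S = Real.sqrt (2*N+1) := by
    rw [← Real.sqrt_sq hSpos.le, hSsq]
  have hCval : Cc = 1 := by
    rw [← Real.sqrt_sq hCpos.le, ← hCsq, Real.sqrt_one]
  have hCval' : ∏ n ∈ Finset.Icc 1 N, (2 * Real.cos (n * Real.pi / (2*N+1))) = 1 := by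
    have heq : ∏ n ∈ Finset.Icc 1 N, (2 * Real.cos (n * Real.pi / (2*N+1))) = Cc := by
      rw [hCdef]
      apply Finset.prod_congr rfl
      intro n hn
      rw [abs_of_pos (hcospos n hn)]
    rw [heq, hCval]
  calc ∏ n ∈ Finset.Icc 1 N, Real.tan (n * Real.pi / (2 * N + 1))
      = ∏ n ∈ Finset.Icc 1 N, ((2 * Real.sin (n * Real.pi / (2*N+1)))
          / (2 * Real.cos (n * Real.pi / (2*N+1)))) := by
        apply Finset.prod_congr rfl
        intro n hn
        rw [Real.tan_eq_sin_div_cos, mul_div_mul_left _ _ (two_ne_zero)]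
    _ = S / (∏ n ∈ Finset.Icc 1 N, (2 * Real.cos (n * Real.pi / (2*N+1)))) := by
        rw [Finset.prod_div_distrib]
    _ = Real.sqrt (2*N+1) := by rw [hCval', hSval, div_one]
end

section
/- For every positive integer N, the product over n = 1 to N of cot²(nπ/(2N+1)) equals 1/(2N+1). -/
open Finset

lemma abs_one_sub_exp_mul_I (x : ℝ) :
    ‖1 - Complex.exp (x * Complex.I)‖ = 2 * |Real.sin (x / 2)| := by
  have h : (1 : ℂ) - Complex.exp (x * Complex.I)
      = Complex.ofReal (1 - Real.cos x) + Complex.ofReal (-Real.sin x) * Complex.I := by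
    rw [Complex.exp_mul_I, ← Complex.ofReal_cos, ← Complex.ofReal_sin]
    push_cast
    ring
  rw [h, Complex.norm_add_mul_I]
  have h2 : (1 - Real.cos x) ^ 2 + (-Real.sin x) ^ 2 = (2 * |Real.sin (x / 2)|) ^ 2 := by
    have hc := Real.cos_sq (x / 2)
    rw [show 2 * (x / 2) = x by ring] at hc
    have hs2 := Real.sin_sq_add_cos_sq (x / 2)
    have hp := Real.sin_sq_add_cos_sq x
    rw [mul_pow, sq_abs]
    nlinarith
  rw [h2, Real.sqrt_sq (by positivity)]

lemma prod_one_sub_zeta (n : ℕ) (hn : 0 < n) :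
    ∏ k ∈ Icc 1 (n - 1), (1 - Complex.exp (2 * Real.pi * Complex.I / n) ^ k) = n := by
  set ζ : ℂ := Complex.exp (2 * Real.pi * Complex.I / n) with hζdef
  have hζ : IsPrimitiveRoot ζ n := Complex.isPrimitiveRoot_exp n hn.ne'
  have hIcc : Icc 1 (n - 1) = Ico 1 n := by ext k; simp; omega
  have key : ∀ z : ℂ, z ≠ 1 → ∏ k ∈ Icc 1 (n - 1), (z - ζ ^ k) = ∑ i ∈ range n, z ^ i := by
    intro z hz
    have h1 : z ^ n - 1 = ∏ i ∈ range n, (z - ζ ^ i) := by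
      have h := X_pow_sub_C_eq_prod hζ hn (one_pow n)
      apply_fun (Polynomial.eval z) at h
      simpa [Polynomial.eval_prod] using h
    have h2 : (∑ i ∈ range n, z ^ i) * (z - 1) = z ^ n - 1 := geom_sum_mul z n
    have h3 : ∏ i ∈ range n, (z - ζ ^ i) = (z - 1) * ∏ k ∈ Icc 1 (n - 1), (z - ζ ^ k) := by
      rw [hIcc, range_eq_Ico, Finset.prod_eq_prod_Ico_succ_bot hn]
      simp
    have hz1 : z - 1 ≠ 0 := sub_ne_zero.mpr hz
    exact (mul_right_cancel₀ hz1 (by rw [h2, h1, h3]; ring)).symm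
  have cont1 : Continuous fun z : ℂ => ∏ k ∈ Icc 1 (n - 1), (z - ζ ^ k) := by
    apply continuous_finset_prod
    intro k _
    fun_prop
  have cont2 : Continuous fun z : ℂ => ∑ i ∈ range n, z ^ i := by
    apply continuous_finset_sum
    intro k _
    fun_prop
  have heq : (fun z : ℂ => ∏ k ∈ Icc 1 (n - 1), (z - ζ ^ k))
      = fun z : ℂ => ∑ i ∈ range n, z ^ i := by
    apply Continuous.ext_on (dense_compl_singleton (1 : ℂ)) cont1 cont2
    intro z hz
    exact key z hz
  have := congrFun heq 1
  simpa using this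

lemma prod_two_sin (n : ℕ) (hn : 0 < n) :
    ∏ k ∈ Icc 1 (n - 1), (2 * Real.sin (k * Real.pi / n)) = n := by
  have h := prod_one_sub_zeta n hn
  have habs := congrArg (‖·‖) h
  rw [norm_prod] at habs
  have hnR : (0 : ℝ) < n := by exact_mod_cast hn
  have hterm : ∀ k ∈ Icc 1 (n - 1),
      ‖1 - Complex.exp (2 * Real.pi * Complex.I / n) ^ k‖
        = 2 * Real.sin (k * Real.pi / n) := by
    intro k hk
    simp only [mem_Icc] at hk
    have hk0 : (0 : ℝ) < k := by exact_mod_cast (show 0 < k by omega)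
    have hkn : (k : ℝ) < n := by exact_mod_cast (show k < n by omega)
    have hexp : Complex.exp (2 * Real.pi * Complex.I / n) ^ k
        = Complex.exp ((2 * Real.pi * k / n : ℝ) * Complex.I) := by
      rw [← Complex.exp_nat_mul]
      push_cast
      have : (n : ℂ) ≠ 0 := by exact_mod_cast hnR.ne'
      field_simp
    rw [hexp, abs_one_sub_exp_mul_I, show (2 * Real.pi * k / n) / 2 = k * Real.pi / n by ring,
      abs_of_pos]
    apply Real.sin_pos_of_pos_of_lt_pi
    · exact div_pos (mul_pos hk0 Real.pi_pos) hnR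
    · rw [div_lt_iff₀ hnR]
      nlinarith [Real.pi_pos]
  rw [Finset.prod_congr rfl hterm] at habs
  simpa using habs

theorem stmt1 (N : ℕ) (hN : 0 < N) :
    ∏ n ∈ Finset.Icc 1 N, (Real.cot (n * Real.pi / (2 * N + 1)))^2 =
      1 / (2 * N + 1) := by
  have hn : 0 < 2 * N + 1 := by omega
  have hnR : (0 : ℝ) < 2 * (N : ℝ) + 1 := by positivity
  set f : ℕ → ℝ := fun k => Real.sin (k * Real.pi / (2 * N + 1)) with hf
  set g : ℕ → ℝ := fun k => Real.cos (k * Real.pi / (2 * N + 1)) with hg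
  have hsin : ∀ k, 1 ≤ k → k ≤ 2 * N → 0 < f k := by
    intro k h1 h2
    apply Real.sin_pos_of_pos_of_lt_pi
    · have : (0 : ℝ) < k := by exact_mod_cast h1
      exact div_pos (mul_pos this Real.pi_pos) hnR
    · rw [div_lt_iff₀ hnR]
      have : (k : ℝ) < 2 * N + 1 := by exact_mod_cast (by omega : k < 2 * N + 1)
      nlinarith [Real.pi_pos]
  set S := ∏ k ∈ Icc 1 N, f k with hS
  set C := ∏ k ∈ Icc 1 N, g k with hC
  have hSpos : 0 < S := Finset.prod_pos (fun k hk => by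
    simp only [mem_Icc] at hk; exact hsin k hk.1 (by omega))
  -- Step A : product of 2*sin over Icc 1 (2N)
  have hA : ∏ k ∈ Icc 1 (2 * N), (2 * f k) = 2 * (N : ℝ) + 1 := by
    have h := prod_two_sin (2 * N + 1) hn
    push_cast at h
    simpa [hf] using h
  have hA' : (2 : ℝ) ^ (2 * N) * ∏ k ∈ Icc 1 (2 * N), f k = 2 * (N : ℝ) + 1 := by
    rw [← hA, Finset.prod_mul_distrib, Finset.prod_const, Nat.card_Icc]
    norm_num
  -- pairing k ↦ 2N+1-k
  have hpair : ∏ k ∈ Icc (N + 1) (2 * N), f k = S := by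
    rw [hS]
    refine prod_nbij' (fun k => 2 * N + 1 - k) (fun k => 2 * N + 1 - k) ?_ ?_ ?_ ?_ ?_
    · intro a ha; simp only [mem_Icc] at *; omega
    · intro a ha; simp only [mem_Icc] at *; omega
    · intro a ha; simp only [mem_Icc] at ha; omega
    · intro a ha; simp only [mem_Icc] at ha; omega
    · intro a ha; simp only [mem_Icc] at ha
      simp only [hf]
      have hc : ((2 * N + 1 - a : ℕ) : ℝ) = 2 * N + 1 - a := by
        have : a ≤ 2 * N + 1 := by omega
        push_cast [this]; ring
      rw [hc, show (2 * (N:ℝ) + 1 - a) * Real.pi / (2 * N + 1)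
          = Real.pi - a * Real.pi / (2 * N + 1) by field_simp, Real.sin_pi_sub]
  -- split
  have hsplit : ∏ k ∈ Icc 1 (2 * N), f k = S * S := by
    have e1 : Icc 1 N = Ioc 0 N := by ext x; simp; omega
    have e2 : Icc (N + 1) (2 * N) = Ioc N (2 * N) := by ext x; simp
    have e3 : Icc 1 (2 * N) = Ioc 0 (2 * N) := by ext x; simp; omega
    rw [e3, ← prod_Ioc_consecutive f (by omega : 0 ≤ N) (by omega : N ≤ 2 * N), ← e1, ← e2,
      hpair, hS, e1]
  have hS2 : S ^ 2 = (2 * (N : ℝ) + 1) / 4 ^ N := by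
    rw [hsplit] at hA'
    have h4 : (4 : ℝ) ^ N = 2 ^ (2 * N) := by rw [pow_mul]; norm_num
    field_simp [h4]
    linear_combination hA' + S ^ 2 * h4
  -- double angle bijection
  have hdouble : ∏ k ∈ Icc 1 N, f (2 * k) = S := by
    rw [hS]
    refine prod_nbij' (fun k => if 2 * k ≤ N then 2 * k else 2 * N + 1 - 2 * k)
      (fun j => if j % 2 = 0 then j / 2 else (2 * N + 1 - j) / 2) ?_ ?_ ?_ ?_ ?_
    · intro a ha; simp only [mem_Icc] at *; split <;> omega
    · intro a ha; simp only [mem_Icc] at *; split <;> omega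
    · intro a ha; simp only [mem_Icc] at ha; split_ifs <;> omega
    · intro a ha; simp only [mem_Icc] at ha; split_ifs <;> omega
    · intro a ha; simp only [mem_Icc] at ha
      by_cases h : 2 * a ≤ N
      · rw [if_pos h]
      · rw [if_neg h]
        simp only [hf]
        have hc : ((2 * N + 1 - 2 * a : ℕ) : ℝ) = 2 * N + 1 - 2 * a := by
          have : 2 * a ≤ 2 * N + 1 := by omega
          push_cast [this]; ring
        rw [hc, show (2 * (N:ℝ) + 1 - 2 * a) * Real.pi / (2 * N + 1)
            = Real.pi - (2 * a : ℕ) * Real.pi / (2 * N + 1) by push_cast; field_simp,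
          Real.sin_pi_sub]
  have hdb2 : ∏ k ∈ Icc 1 N, f (2 * k) = 2 ^ N * (S * C) := by
    have step : ∀ k ∈ Icc 1 N, f (2 * k) = 2 * (f k * g k) := by
      intro k _
      simp only [hf, hg]
      push_cast
      rw [show (2 * (k : ℝ)) * Real.pi / (2 * N + 1)
          = 2 * ((k : ℝ) * Real.pi / (2 * N + 1)) by ring, Real.sin_two_mul]
      ring
    rw [prod_congr rfl step, Finset.prod_mul_distrib, Finset.prod_mul_distrib,
      Finset.prod_const, Nat.card_Icc, hS, hC]
    norm_num
  have h2N : (2 : ℝ) ^ N ≠ 0 := by positivity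
  have hCval : C = 1 / 2 ^ N := by
    have h := hdouble.symm.trans hdb2
    field_simp
    nlinarith [hSpos]
  have hcot : ∀ k ∈ Icc 1 N, (Real.cot (k * Real.pi / (2 * N + 1))) ^ 2
      = (g k) ^ 2 / (f k) ^ 2 := by
    intro k _
    rw [Real.cot_eq_cos_div_sin, div_pow]
  rw [prod_congr rfl hcot, Finset.prod_div_distrib, Finset.prod_pow, Finset.prod_pow,
    ← hS, ← hC, hCval, hS2]
  have hne : 2 * (N : ℝ) + 1 ≠ 0 := hnR.ne'
  have h4 : (4 : ℝ) ^ N = (2 ^ N) ^ 2 := by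
    rw [show (4 : ℝ) = 2 ^ 2 by norm_num, ← pow_mul, ← pow_mul, Nat.mul_comm]
  rw [h4]
  field_simp
end

section
/- The improper integral ∫₀^{1/2} ln(tan(πx)) dx equals 0. -/
theorem stmt12 : ∫ x in (0:ℝ)..(1/2), Real.log (Real.tan (Real.pi * x)) = 0 := by
  have key : ∀ x : ℝ, Real.log (Real.tan (Real.pi * (1/2 - x)))
      = - Real.log (Real.tan (Real.pi * x)) := by
    intro x
    have : Real.pi * (1/2 - x) = Real.pi / 2 - Real.pi * x := by ring
    rw [this, Real.tan_pi_div_two_sub, Real.log_inv]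
  have h := intervalIntegral.integral_comp_sub_left (a := (0:ℝ)) (b := 1/2)
    (fun x => Real.log (Real.tan (Real.pi * x))) (1/2)
  simp only [key, sub_zero, sub_self] at h
  rw [intervalIntegral.integral_neg] at h
  linarith [h]
end
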